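/- For every integer N ≥ 1, the right Radau polynomial R_N has N pairwise distinct real roots, all lying in the half-open interval (0, 1]; in particular R_N has no multiple roots (no real number is a common root of R_N and its derivative). -/

import Mathlib

open Polynomial

/-- Shifted Legendre polynomial on `[0,1]` via the Rodrigues formula. -/
noncomputable def shLegendre (n : ℕ) : Polynomial ℝ :=
  (n.factorial : ℝ)⁻¹ • derivative^[n] ((X ^ 2 - X) ^ n)

/-- Right Radau polynomial `R_N = ((-1)^N/2) (L_N - L_{N-1})`. -/
noncomputable def rightRadau (N : ℕ) : Polynomial ℝ :=
  ((-1 : ℝ) ^ N / 2) • (shLegendre N - shLegendre (N - 1))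

lemma rightRadau_eq (m : ℕ) :
    rightRadau (m + 1) = ((-1 : ℝ) ^ (m+1) / m.factorial) •
      derivative^[m] (X ^ m * (X - 1) ^ (m + 1) : ℝ[X]) := by
  have hder : derivative ((X ^ 2 - X : ℝ[X]) ^ (m+1))
      = ((m:ℝ)+1) • ((X ^ 2 - X) ^ m * (2 * X - 1)) := by
    have hd1 : derivative (X ^ 2 - X : ℝ[X]) = 2 * X - 1 := by
      simp only [derivative_sub, derivative_X_pow, derivative_X, C_eq_natCast]
      push_cast
      ring
    rw [derivative_pow, hd1, smul_eq_C_mul]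
    simp only [map_add, map_one, map_natCast]
    push_cast
    ring
  have hkey : (X ^ 2 - X : ℝ[X]) ^ m * (2 * X - 1)
      = (X ^ 2 - X) ^ m + (2:ℝ) • (X ^ m * (X - 1) ^ (m+1)) := by
    have h : (X ^ 2 - X : ℝ[X]) ^ m = X ^ m * (X - 1) ^ m := by
      rw [← mul_pow]; congr 1; ring
    rw [h, smul_eq_C_mul]
    have h2 : (C (2:ℝ)) = (2 : ℝ[X]) := by
      simpa using map_ofNat (C : ℝ →+* ℝ[X]) 2
    rw [h2]
    ring
  unfold rightRadau shLegendre
  simp only [Nat.add_sub_cancel]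
  have iter_add : ∀ (p q : ℝ[X]), derivative^[m] (p + q)
      = derivative^[m] p + derivative^[m] q := by
    intro p q
    simp_rw [← Module.End.pow_apply, map_add]
  rw [Function.iterate_succ_apply, hder, iterate_derivative_smul, hkey, iter_add,
    iterate_derivative_smul]
  have hf : (m.factorial : ℝ) ≠ 0 := by exact_mod_cast m.factorial_ne_zero
  have hm : ((m:ℝ)+1) ≠ 0 := by positivity
  have hfs : (((m+1).factorial : ℝ)) = ((m:ℝ)+1) * m.factorial := by
    rw [Nat.factorial_succ]; push_cast; ring
  match_scalars
  · rw [hfs]; field_simp; ring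
  · rw [hfs]; field_simp


section helpers

lemma strictMono_snoc {n : ℕ} {f : Fin n → ℝ} {a : ℝ} (hf : StrictMono f)
    (ha : ∀ i, f i < a) : StrictMono (Fin.snoc f a : Fin (n+1) → ℝ) := by
  rw [Fin.strictMono_iff_lt_succ]
  intro i
  rw [Fin.snoc_castSucc]
  rcases Fin.eq_castSucc_or_eq_last i.succ with ⟨j, hj⟩ | hj
  · rw [hj, Fin.snoc_castSucc]
    apply hf
    have hv := congrArg Fin.val hj
    simp only [Fin.val_succ, Fin.coe_castSucc] at hv
    exact Fin.lt_def.mpr (by omega)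
  · rw [hj, Fin.snoc_last]; exact ha i

lemma rolle_poly {g : ℝ[X]} {a b : ℝ} (hab : a < b) (ha : g.IsRoot a) (hb : g.IsRoot b) :
    ∃ c ∈ Set.Ioo a b, (derivative g).IsRoot c := by
  obtain ⟨c, hc, hc'⟩ := exists_deriv_eq_zero hab (g.continuous.continuousOn)
    (by simp [ha.eq_zero, hb.eq_zero])
  exact ⟨c, hc, by rwa [Polynomial.deriv] at hc'⟩

lemma rolle_chain {k : ℕ} (R : Fin (k+1) → ℝ) (hR : StrictMono R) (g : ℝ[X])
    (hroot : ∀ i, g.IsRoot (R i)) :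
    ∃ c : Fin k → ℝ, StrictMono c ∧ (∀ i, c i ∈ Set.Ioo (R i.castSucc) (R i.succ)) ∧
      ∀ i, (derivative g).IsRoot (c i) := by
  have H : ∀ i : Fin k, ∃ x ∈ Set.Ioo (R i.castSucc) (R i.succ), (derivative g).IsRoot x :=
    fun i => rolle_poly (hR (Fin.castSucc_lt_succ (i := i))) (hroot _) (hroot _)
  choose c hc hc' using H
  refine ⟨c, fun i j hij => ?_, hc, hc'⟩
  calc c i < R i.succ := (hc i).2
    _ ≤ R j.castSucc := hR.monotone (by
        rw [Fin.le_def]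
        simp only [Fin.val_succ, Fin.coe_castSucc]
        exact Fin.lt_def.mp hij)
    _ < c j := (hc j).1

end helpers

lemma radau_invariant (m : ℕ) :
    ∀ k, k ≤ m →
    ∃ R : Fin (k+1) → ℝ, StrictMono R ∧ (∀ i, R i ∈ Set.Ioc (0:ℝ) 1) ∧ R (Fin.last k) = 1 ∧
      (derivative^[k] (X ^ m * (X - C 1) ^ (m+1) : ℝ[X])).roots
        = Multiset.replicate (m - k) 0 + Multiset.replicate (m + 1 - k) 1
          + Multiset.map (fun i : Fin k => R i.castSucc) Finset.univ.val := by
  have hfm : (X ^ m * (X - C 1) ^ (m+1) : ℝ[X]).Monic :=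
    (monic_X_pow m).mul ((monic_X_sub_C 1).pow (m+1))
  have hfne : (X ^ m * (X - C 1) ^ (m+1) : ℝ[X]) ≠ 0 := hfm.ne_zero
  have hfdeg : (X ^ m * (X - C 1) ^ (m+1) : ℝ[X]).natDegree = 2*m+1 := by
    rw [natDegree_mul (pow_ne_zero _ X_ne_zero) (pow_ne_zero _ (X_sub_C_ne_zero 1)),
      natDegree_pow, natDegree_pow, natDegree_X, natDegree_X_sub_C]
    ring
  intro k
  induction k with
  | zero =>
    intro _
    refine ⟨fun _ => 1, fun i j h => absurd (Fin.lt_def.mp h) (by omega),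
      fun _ => ⟨one_pos, le_refl 1⟩, rfl, ?_⟩
    simp only [Function.iterate_zero_apply]
    rw [roots_mul (mul_ne_zero (pow_ne_zero _ X_ne_zero) (pow_ne_zero _ (X_sub_C_ne_zero 1))),
      roots_pow, roots_pow, roots_X, roots_X_sub_C]
    simp [Multiset.nsmul_singleton]
  | succ k ih =>
    intro hk1
    have hk : k ≤ m := by omega
    obtain ⟨R, hRmono, hRIoc, hRlast, hroots⟩ := ih hk
    set g : ℝ[X] := derivative^[k] (X ^ m * (X - C 1) ^ (m+1)) with hg
    -- card of roots
    have hcard : Multiset.card g.roots = 2*m+1-k := by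
      rw [hroots]
      simp only [Multiset.card_add, Multiset.card_replicate, Multiset.card_map]
      simp only [Finset.card_val, Finset.card_univ, Fintype.card_fin]
      omega
    have hgne : g ≠ 0 := by
      intro h
      rw [h, roots_zero] at hcard
      simp at hcard
      omega
    have hdegle : g.natDegree ≤ 2*m+1-k := by
      have := natDegree_iterate_derivative (X ^ m * (X - C 1) ^ (m+1) : ℝ[X]) k
      rwa [hfdeg] at this
    have hdeg : g.natDegree = 2*m+1-k := by
      have := g.card_roots'
      omega
    -- every R i is a root of g
    have hRroot : ∀ i, g.IsRoot (R i) := by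
      intro i
      have : R i ∈ g.roots := by
        rcases Fin.eq_castSucc_or_eq_last i with ⟨j, hj⟩ | hj
        · rw [hroots, hj]
          refine Multiset.mem_add.mpr (Or.inr ?_)
          exact Multiset.mem_map.mpr ⟨j, Finset.mem_univ_val _, rfl⟩
        · rw [hroots, hj, hRlast]
          refine Multiset.mem_add.mpr (Or.inl (Multiset.mem_add.mpr (Or.inr ?_)))
          exact Multiset.mem_replicate.mpr ⟨by omega, rfl⟩
      exact (mem_roots hgne).mp this
    classical
    -- membership exclusions
    have h0notmem : (0:ℝ) ∉ Multiset.map (fun i : Fin k => R i.castSucc) Finset.univ.val := by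
      simp only [Multiset.mem_map]
      rintro ⟨i, -, h⟩
      exact (ne_of_gt (hRIoc i.castSucc).1) h
    have h1notmem : (1:ℝ) ∉ Multiset.map (fun i : Fin k => R i.castSucc) Finset.univ.val := by
      simp only [Multiset.mem_map]
      rintro ⟨i, -, h⟩
      have : R i.castSucc < 1 := hRlast ▸ hRmono (Fin.castSucc_lt_last i)
      exact (ne_of_lt this) h
    have rm0 : rootMultiplicity 0 g = m - k := by
      rw [← count_roots, hroots, Multiset.count_add, Multiset.count_add,
        Multiset.count_replicate, Multiset.count_replicate,
        Multiset.count_eq_zero.mpr h0notmem]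
      norm_num
    have rm1 : rootMultiplicity 1 g = m + 1 - k := by
      rw [← count_roots, hroots, Multiset.count_add, Multiset.count_add,
        Multiset.count_replicate, Multiset.count_replicate,
        Multiset.count_eq_zero.mpr h1notmem]
      norm_num
    have hroot0 : g.IsRoot 0 := (rootMultiplicity_pos hgne).mp (by omega)
    have hroot1 : g.IsRoot 1 := (rootMultiplicity_pos hgne).mp (by omega)
    have hg'ne : derivative g ≠ 0 := by
      intro h
      have := natDegree_eq_zero_of_derivative_eq_zero h
      omega
    have rm0' : rootMultiplicity 0 (derivative g) = m - (k+1) := by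
      rw [derivative_rootMultiplicity_of_root hroot0, rm0]
      omega
    have rm1' : rootMultiplicity 1 (derivative g) = m + 1 - (k+1) := by
      rw [derivative_rootMultiplicity_of_root hroot1, rm1]
      omega
    -- extended tuple and Rolle
    set E : Fin (k+2) → ℝ := Fin.cons 0 R with hE
    have hEmono : StrictMono E := StrictMono.vecCons hRmono (hRIoc 0).1
    have hE0 : E 0 = 0 := rfl
    have hElast : E (Fin.last (k+1)) = 1 := by
      rw [hE, ← Fin.succ_last, Fin.cons_succ, hRlast]
    have hEroot : ∀ i, g.IsRoot (E i) := by
      intro i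
      refine Fin.cases ?_ (fun j => ?_) i
      · simpa [hE] using hroot0
      · simpa [hE, Fin.cons_succ] using hRroot j
    obtain ⟨c, hcmono, hcIoo, hcroot⟩ := rolle_chain E hEmono g hEroot
    have hcIoo' : ∀ i, c i ∈ Set.Ioo (0:ℝ) 1 := by
      intro i
      constructor
      · have h1 : E 0 ≤ E i.castSucc := hEmono.monotone (Fin.zero_le _)
        rw [hE0] at h1
        exact lt_of_le_of_lt h1 (hcIoo i).1
      · have h2 : E i.succ ≤ E (Fin.last (k+1)) := hEmono.monotone (Fin.le_last _)
        rw [hElast] at h2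
        exact lt_of_lt_of_le (hcIoo i).2 h2
    have hcinj : Function.Injective c := hcmono.injective
    have hmapnodup : (Multiset.map c Finset.univ.val).Nodup :=
      Finset.univ.nodup.map hcinj
    -- the candidate root multiset of the derivative
    set M : Multiset ℝ := Multiset.replicate (m - (k+1)) 0
      + Multiset.replicate (m + 1 - (k+1)) 1 + Multiset.map c Finset.univ.val with hMdef
    have hc0notmem : (0:ℝ) ∉ Multiset.map c Finset.univ.val := by
      simp only [Multiset.mem_map]
      rintro ⟨i, -, h⟩
      exact (ne_of_gt (hcIoo' i).1) h
    have hc1notmem : (1:ℝ) ∉ Multiset.map c Finset.univ.val := by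
      simp only [Multiset.mem_map]
      rintro ⟨i, -, h⟩
      exact (ne_of_lt (hcIoo' i).2) h
    have hle : M ≤ (derivative g).roots := by
      rw [Multiset.le_iff_count]
      intro a
      rw [count_roots, hMdef, Multiset.count_add, Multiset.count_add,
        Multiset.count_replicate, Multiset.count_replicate]
      by_cases ha0 : a = 0
      · subst ha0
        rw [Multiset.count_eq_zero.mpr hc0notmem, rm0']
        norm_num
      by_cases ha1 : a = 1
      · subst ha1
        rw [Multiset.count_eq_zero.mpr hc1notmem, rm1']
        norm_num
      rw [if_neg (fun h => ha0 h.symm), if_neg (fun h => ha1 h.symm)]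
      by_cases hmem : a ∈ Multiset.map c Finset.univ.val
      · obtain ⟨i, -, hi⟩ := Multiset.mem_map.mp hmem
        have h1 : Multiset.count a (Multiset.map c Finset.univ.val) ≤ 1 :=
          Multiset.nodup_iff_count_le_one.mp hmapnodup a
        have h2 : 1 ≤ rootMultiplicity a (derivative g) :=
          (rootMultiplicity_pos hg'ne).mpr (hi ▸ hcroot i)
        omega
      · rw [Multiset.count_eq_zero.mpr hmem]
        omega
    have hM : M = (derivative g).roots := by
      refine Multiset.eq_of_le_of_card_le hle ?_
      have hcard' : Multiset.card (derivative g).roots ≤ (derivative g).natDegree :=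
        (derivative g).card_roots'
      have hdle : (derivative g).natDegree ≤ g.natDegree - 1 := natDegree_derivative_le g
      have hcardM : Multiset.card M = (m - (k+1)) + (m + 1 - (k+1)) + (k+1) := by
        rw [hMdef]
        simp only [Multiset.card_add, Multiset.card_replicate, Multiset.card_map,
          Finset.card_val, Finset.card_univ, Fintype.card_fin]
      omega
    refine ⟨Fin.snoc c 1, strictMono_snoc hcmono (fun i => (hcIoo' i).2), ?_,
      (by simp), ?_⟩
    · intro i
      rcases Fin.eq_castSucc_or_eq_last i with ⟨j, hj⟩ | hj
      · rw [hj, Fin.snoc_castSucc]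
        exact ⟨(hcIoo' j).1, le_of_lt (hcIoo' j).2⟩
      · rw [hj, Fin.snoc_last]
        exact ⟨one_pos, le_refl 1⟩
    · rw [Function.iterate_succ_apply', ← hg, ← hM, hMdef]
      congr 1
      refine Multiset.map_congr rfl ?_
      intro i _
      rw [Fin.snoc_castSucc]

/-- For `N ≥ 1`, the right Radau polynomial `R_N` has `N` pairwise distinct real roots,
all lying in `(0, 1]`, and it has no multiple roots: no real number is a common root of
`R_N` and its derivative. -/
theorem rightRadau_roots_distinct_in_Ioc (N : ℕ) (hN : 1 ≤ N) :
    (∃ s : Finset ℝ, s.card = N ∧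
      ∀ x ∈ s, x ∈ Set.Ioc (0 : ℝ) 1 ∧ (rightRadau N).eval x = 0) ∧
    ∀ x : ℝ, (rightRadau N).eval x = 0 → (derivative (rightRadau N)).eval x ≠ 0 := by
  classical
  obtain ⟨m, rfl⟩ : ∃ m, N = m + 1 := ⟨N - 1, by omega⟩
  obtain ⟨R, hRmono, hRIoc, hRlast, hroots⟩ := radau_invariant m m le_rfl
  rw [C_1] at hroots
  set P := rightRadau (m+1) with hP
  have hfac : (m.factorial : ℝ) ≠ 0 := by exact_mod_cast m.factorial_ne_zero
  have hco : ((-1 : ℝ) ^ (m+1) / m.factorial) ≠ 0 :=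
    div_ne_zero (pow_ne_zero _ (by norm_num)) hfac
  have hProots : P.roots = Multiset.replicate (m - m) 0 + Multiset.replicate (m + 1 - m) 1
      + Multiset.map (fun i : Fin m => R i.castSucc) Finset.univ.val := by
    rw [hP, rightRadau_eq m, roots_smul_nonzero _ hco]
    exact hroots
  have hcard : Multiset.card P.roots = m + 1 := by
    rw [hProots]
    simp only [Multiset.card_add, Multiset.card_replicate, Multiset.card_map,
      Finset.card_val, Finset.card_univ, Fintype.card_fin]
    omega
  have hPne : P ≠ 0 := by
    intro h
    rw [h, roots_zero] at hcard
    simp at hcard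
  have h1notmem : (1:ℝ) ∉ Multiset.map (fun i : Fin m => R i.castSucc) Finset.univ.val := by
    simp only [Multiset.mem_map]
    rintro ⟨i, -, h⟩
    have : R i.castSucc < 1 := hRlast ▸ hRmono (Fin.castSucc_lt_last i)
    exact (ne_of_lt this) h
  have hmapnodup : (Multiset.map (fun i : Fin m => R i.castSucc) Finset.univ.val).Nodup :=
    Finset.univ.nodup.map fun a b hab =>
      Fin.castSucc_injective m (hRmono.injective hab)
  have hcount_le : ∀ x : ℝ, P.roots.count x ≤ 1 := by
    intro x
    rw [hProots]
    simp only [Nat.sub_self, Multiset.replicate_zero, Multiset.count_zero, zero_add,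
      Nat.add_sub_cancel_left, Multiset.replicate_one, Multiset.count_add,
      Multiset.count_singleton]
    by_cases hx : x = 1
    · subst hx
      rw [Multiset.count_eq_zero.mpr h1notmem]
      simp
    · rw [if_neg hx]
      have := Multiset.nodup_iff_count_le_one.mp hmapnodup x
      omega
  have hPRroot : ∀ i, P.IsRoot (R i) := by
    intro i
    have : R i ∈ P.roots := by
      rcases Fin.eq_castSucc_or_eq_last i with ⟨j, hj⟩ | hj
      · rw [hProots, hj]
        exact Multiset.mem_add.mpr (Or.inr (Multiset.mem_map.mpr ⟨j, Finset.mem_univ_val _, rfl⟩))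
      · rw [hProots, hj, hRlast]
        refine Multiset.mem_add.mpr (Or.inl (Multiset.mem_add.mpr (Or.inr ?_)))
        exact Multiset.mem_replicate.mpr ⟨by omega, rfl⟩
    exact (mem_roots hPne).mp this
  constructor
  · refine ⟨Finset.image R Finset.univ, ?_, ?_⟩
    · rw [Finset.card_image_of_injective _ hRmono.injective, Finset.card_univ,
        Fintype.card_fin]
    · intro x hx
      obtain ⟨i, -, rfl⟩ := Finset.mem_image.mp hx
      exact ⟨hRIoc i, hPRroot i⟩
  · intro x hx habs
    have hxroot : P.IsRoot x := hx
    have hxmem : x ∈ P.roots := (mem_roots hPne).mpr hxroot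
    have hrm : rootMultiplicity x P = 1 := by
      have h1 : 1 ≤ P.roots.count x := Multiset.one_le_count_iff_mem.mpr hxmem
      have h2 := hcount_le x
      rw [count_roots] at h1 h2
      omega
    have hP'ne : derivative P ≠ 0 := by
      intro h
      have hd := natDegree_eq_zero_of_derivative_eq_zero h
      have := P.card_roots'
      omega
    have : rootMultiplicity x (derivative P) = 0 := by
      rw [derivative_rootMultiplicity_of_root hxroot, hrm]
    have hpos : 0 < rootMultiplicity x (derivative P) :=
      (rootMultiplicity_pos hP'ne).mpr habs
    omega
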